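/- arXiv:2305.09406 — 3 statements merged into one kernel-verified Lean document; each statement's English description precedes it below -/
import Mathlib

section
/- Let G be the decorated path obtained as the rooted product of the path P_n with rooted graphs G_1,…,G_n. Then, as an identity of real rational functions, α_1^G = α_1^{G_1} − 1/(α_2^{G_2} − 1/(α_3^{G_3} − ⋯ − 1/α_n^{G_n})); that is, φ^G/φ^{G∖1} equals the continued fraction whose k-th partial quotient is α_k^{G_k}. -/
open Polynomial Matrix

noncomputable section

/-- The characteristic polynomial `φ` of a matrix. -/
def phi {V : Type} [Fintype V] [DecidableEq V] (M : Matrix V V ℝ) : Polynomial ℝ :=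
  M.charpoly

/-- The characteristic polynomial of the matrix with row/column `v` deleted (`φ^{G∖v}`). -/
def phiDel {V : Type} [Fintype V] [DecidableEq V] (M : Matrix V V ℝ) (v : V) : Polynomial ℝ :=
  (M.submatrix (fun u : {u : V // u ≠ v} => (u : V)) (fun u : {u : V // u ≠ v} => (u : V))).charpoly

/-- The rational function `α_v = φ^G / φ^{G∖v}`. -/
def alpha {V : Type} [Fintype V] [DecidableEq V] (M : Matrix V V ℝ) (v : V) : RatFunc ℝ :=
  algebraMap (Polynomial ℝ) (RatFunc ℝ) (phi M) / algebraMap (Polynomial ℝ) (RatFunc ℝ) (phiDel M v)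

/-- `θ` is a pole of `α_v`. -/
def IsPoleAt {V : Type} [Fintype V] [DecidableEq V] (M : Matrix V V ℝ) (v : V) (θ : ℝ) : Prop :=
  (phi M).rootMultiplicity θ < (phiDel M v).rootMultiplicity θ

/-- `α_v(θ) = 0`. -/
def IsZeroAt {V : Type} [Fintype V] [DecidableEq V] (M : Matrix V V ℝ) (v : V) (θ : ℝ) : Prop :=
  (phiDel M v).rootMultiplicity θ < (phi M).rootMultiplicity θ

/-- Evaluation of `α_v` at a real number (meaningful away from poles). -/
def evalAlpha {V : Type} [Fintype V] [DecidableEq V] (M : Matrix V V ℝ) (v : V) (θ : ℝ) : ℝ :=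
  (alpha M v).eval (RingHom.id ℝ) θ

/-- `θ` is an eigenvalue admitting an eigenvector with nonzero entry at `v`. -/
def InSupport {V : Type} [Fintype V] (M : Matrix V V ℝ) (v : V) (θ : ℝ) : Prop :=
  ∃ x : V → ℝ, M *ᵥ x = θ • x ∧ x v ≠ 0

/-- Strong cospectrality: for each eigenvalue either all eigenvectors agree at `i` and `j`,
or they are all opposite at `i` and `j`. -/
def StronglyCospectral {V : Type} [Fintype V] (M : Matrix V V ℝ) (i j : V) : Prop :=
  ∀ θ : ℝ, (∀ x : V → ℝ, M *ᵥ x = θ • x → x i = x j) ∨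
    (∀ x : V → ℝ, M *ᵥ x = θ • x → x i = - x j)

/-- `Φ⁺_{ij}`. -/
def PhiPlus {V : Type} [Fintype V] (M : Matrix V V ℝ) (i j : V) : Set ℝ :=
  {θ | InSupport M i θ ∧ ∀ x : V → ℝ, M *ᵥ x = θ • x → x i = x j}

/-- `Φ⁻_{ij}`. -/
def PhiMinus {V : Type} [Fintype V] (M : Matrix V V ℝ) (i j : V) : Set ℝ :=
  {θ | InSupport M i θ ∧ ∀ x : V → ℝ, M *ᵥ x = θ • x → x i = - x j}

open Classical in
/-- The real adjacency matrix of a simple graph. -/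
def adjMat {V : Type} (G : SimpleGraph V) : Matrix V V ℝ :=
  fun a b => if G.Adj a b then 1 else 0

open Classical in
/-- The complex adjacency matrix of a simple graph. -/
def adjMatC {V : Type} (G : SimpleGraph V) : Matrix V V ℂ :=
  fun a b => if G.Adj a b then 1 else 0

/-- The decorated path: the rooted product of the path `P_n` with rooted graphs `G_1, …, G_n`. -/
def decoratedPath {n : ℕ} {V : Fin n → Type} (G : ∀ i, SimpleGraph (V i)) (r : ∀ i, V i) :
    SimpleGraph ((i : Fin n) × V i) :=
  SimpleGraph.fromRel (fun a b =>
    (∃ (i : Fin n) (u v : V i), a = ⟨i, u⟩ ∧ b = ⟨i, v⟩ ∧ (G i).Adj u v) ∨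
    ((a.1 : ℕ) + 1 = (b.1 : ℕ) ∧ a.2 = r a.1 ∧ b.2 = r b.1))

/-- Continued fraction `a₁ - 1/(a₂ - 1/(⋯ - 1/aₙ))`. -/
def contFrac : List (RatFunc ℝ) → RatFunc ℝ
  | [] => 0
  | x :: xs => x - 1 / contFrac xs

/-- Perfect state transfer between distinct vertices `i` and `j` at time `t`. -/
def PST {V : Type} [Fintype V] [DecidableEq V] (G : SimpleGraph V) (i j : V) (t : ℝ) : Prop :=
  i ≠ j ∧ ∃ lam : ℂ, ‖lam‖ = 1 ∧
    (NormedSpace.exp ((Complex.I * (t : ℂ)) • adjMatC G)) *ᵥ (Pi.single i 1 : V → ℂ) =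
      lam • (Pi.single j 1 : V → ℂ)

/-- The graph obtained from disjoint graphs `G₁`, `G₂` by adding an edge joining their roots. -/
def joinRoots {V₁ V₂ : Type} (G₁ : SimpleGraph V₁) (G₂ : SimpleGraph V₂) (r₁ : V₁) (r₂ : V₂) :
    SimpleGraph (V₁ ⊕ V₂) :=
  SimpleGraph.fromRel (fun a b =>
    (∃ x y, a = Sum.inl x ∧ b = Sum.inl y ∧ G₁.Adj x y) ∨
    (∃ x y, a = Sum.inr x ∧ b = Sum.inr y ∧ G₂.Adj x y) ∨
    (a = Sum.inl r₁ ∧ b = Sum.inr r₂))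


lemma det_updateColumn_single_self {V : Type} [Fintype V] [DecidableEq V] {R : Type*} [CommRing R]
    (N : Matrix V V R) (r : V) :
    (N.updateCol r (Pi.single r 1)).det =
      (N.submatrix (fun u : {u : V // u ≠ r} => (u : V))
        (fun u : {u : V // u ≠ r} => (u : V))).det := by
  classical
  haveI : Unique {u : V // ¬ u ≠ r} := ⟨⟨⟨r, by simp⟩⟩, fun u => Subtype.ext (not_ne_iff.mp u.2)⟩
  let e : {u : V // u ≠ r} ⊕ {u : V // ¬ u ≠ r} ≃ V := Equiv.sumCompl _
  rw [← det_submatrix_equiv_self e]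
  have he : ((N.updateCol r (Pi.single r 1)).submatrix e e) =
      fromBlocks
        (N.submatrix (fun u : {u : V // u ≠ r} => (u : V)) (fun u : {u : V // u ≠ r} => (u : V)))
        0 (fun _ v => N r (v : V)) 1 := by
    ext i j
    rcases i with u | u <;> rcases j with v | v
    · simp [e, fromBlocks, updateCol_apply, v.2]
    · have hv : (v : V) = r := not_ne_iff.mp v.2
      simp [e, fromBlocks, updateCol_apply, hv, Pi.single_eq_of_ne u.2]
    · have hu : (u : V) = r := not_ne_iff.mp u.2
      simp [e, fromBlocks, updateCol_apply, hu, v.2]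
    · have hu : (u : V) = r := not_ne_iff.mp u.2
      have hv : (v : V) = r := not_ne_iff.mp v.2
      simp [e, fromBlocks, updateCol_apply, hu, hv, Subsingleton.elim u v,
        Matrix.one_apply]
  rw [he]; exact (det_fromBlocks_zero₁₂ _ _ _).trans (by rw [det_one, mul_one])

lemma charmatrix_submatrix_val {V : Type} [Fintype V] [DecidableEq V] (M : Matrix V V ℝ) (r : V) :
    charmatrix (M.submatrix (fun u : {u : V // u ≠ r} => (u : V))
        (fun u : {u : V // u ≠ r} => (u : V)))
      = (charmatrix M).submatrix (fun u : {u : V // u ≠ r} => (u : V))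
        (fun u : {u : V // u ≠ r} => (u : V)) := by
  ext i j
  by_cases h : i = j
  · subst h; simp [charmatrix_apply, diagonal_apply]
  · have h2 : (i : V) ≠ (j : V) := fun hh => h (Subtype.ext hh)
    simp [charmatrix_apply, diagonal_apply, h, h2]

lemma phiDel_eq_det {V : Type} [Fintype V] [DecidableEq V] (M : Matrix V V ℝ) (r : V) :
    phiDel M r = ((charmatrix M).submatrix (fun u : {u : V // u ≠ r} => (u : V))
        (fun u : {u : V // u ≠ r} => (u : V))).det := by
  rw [phiDel, Matrix.charpoly, charmatrix_submatrix_val]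

open Classical in
def joinMat {V₁ V₂ : Type} (A : Matrix V₁ V₁ ℝ) (B : Matrix V₂ V₂ ℝ) (r₁ : V₁) (r₂ : V₂) :
    Matrix (V₁ ⊕ V₂) (V₁ ⊕ V₂) ℝ :=
  fromBlocks A (fun u v => if u = r₁ ∧ v = r₂ then 1 else 0)
    (fun u v => if u = r₂ ∧ v = r₁ then 1 else 0) B

lemma phi_join {V₁ V₂ : Type} [Fintype V₁] [Fintype V₂] [DecidableEq V₁] [DecidableEq V₂]
    (A : Matrix V₁ V₁ ℝ) (B : Matrix V₂ V₂ ℝ) (r₁ : V₁) (r₂ : V₂) :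
    phi (joinMat A B r₁ r₂) = phi A * phi B - phiDel A r₁ * phiDel B r₂ := by
  classical
  set N := charmatrix (joinMat A B r₁ r₂) with hNdef
  have hphi : phi (joinMat A B r₁ r₂) = N.det := rfl
  have hNl : ∀ u w, N (Sum.inl u) (Sum.inl w) = charmatrix A u w := by
    intro u w; rw [hNdef]; exact congrFun (congrFun (charmatrix_fromBlocks A _ _ B) (Sum.inl u)) (Sum.inl w)
  have hNr : ∀ v w, N (Sum.inr v) (Sum.inr w) = charmatrix B v w := by
    intro v w; rw [hNdef]; exact congrFun (congrFun (charmatrix_fromBlocks A _ _ B) (Sum.inr v)) (Sum.inr w)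
  have hNlr : ∀ u w, N (Sum.inl u) (Sum.inr w) =
      if u = r₁ ∧ w = r₂ then (-1 : ℝ[X]) else 0 := by
    intro u w
    simp only [hNdef, joinMat, charmatrix_fromBlocks, fromBlocks, Matrix.of_apply, Sum.elim_inl,
      Sum.elim_inr, Matrix.neg_apply, Matrix.map_apply]
    split_ifs <;> simp <;> tauto
  have hNrl : ∀ v w, N (Sum.inr v) (Sum.inl w) =
      if v = r₂ ∧ w = r₁ then (-1 : ℝ[X]) else 0 := by
    intro v w
    simp only [hNdef, joinMat, charmatrix_fromBlocks, fromBlocks, Matrix.of_apply, Sum.elim_inl,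
      Sum.elim_inr, Matrix.neg_apply, Matrix.map_apply]
    split_ifs <;> simp <;> tauto
  -- decompose the column at `inr r₂`
  have hcol : (fun i => N i (Sum.inr r₂)) =
      (Sum.elim (fun _ => (0 : ℝ[X])) (fun v => charmatrix B v r₂)) +
        (-1 : ℝ[X]) • (Pi.single (Sum.inl r₁) 1 : V₁ ⊕ V₂ → ℝ[X]) := by
    funext i
    rcases i with u | v
    · by_cases h : u = r₁
      · subst h; simp [hNlr]
      · simp [hNlr, h, Pi.single_eq_of_ne (fun hh : Sum.inl u = Sum.inl r₁ => h (by
          simpa using hh))]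
    · simp [hNr, Pi.single_eq_of_ne (fun hh : Sum.inr v = Sum.inl r₁ => by simp at hh)]
  have h1 : N.det =
      (N.updateCol (Sum.inr r₂) (Sum.elim (fun _ => (0 : ℝ[X])) (fun v => charmatrix B v r₂))).det
      + (-1 : ℝ[X]) * (N.updateCol (Sum.inr r₂) (Pi.single (Sum.inl r₁) 1)).det := by
    conv_lhs => rw [← updateCol_eq_self N (Sum.inr r₂), hcol]
    rw [det_updateCol_add, det_updateCol_smul]
  -- term 1
  have hT1 : (N.updateCol (Sum.inr r₂)
      (Sum.elim (fun _ => (0 : ℝ[X])) (fun v => charmatrix B v r₂))).det = phi A * phi B := by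
    have he : N.updateCol (Sum.inr r₂)
        (Sum.elim (fun _ => (0 : ℝ[X])) (fun v => charmatrix B v r₂)) =
        fromBlocks (charmatrix A) 0 (fun v u => N (Sum.inr v) (Sum.inl u)) (charmatrix B) := by
      ext i j
      rcases i with u | v <;> rcases j with w | w <;>
        simp only [updateCol_apply, fromBlocks, Matrix.of_apply, Sum.elim_inl, Sum.elim_inr,
          Sum.inr.injEq, reduceCtorEq]
      · simp [hNl]
      · by_cases h : w = r₂
        · subst h; simp
        · simp [h, hNlr]
      · simp
      · by_cases h : w = r₂
        · subst h; simp
        · simp [h, hNr]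
    rw [he]; exact det_fromBlocks_zero₁₂ _ _ _
  -- term 2
  set Q := N.updateCol (Sum.inr r₂) (Pi.single (Sum.inl r₁) 1) with hQdef
  have hcol2 : (fun i => Q i (Sum.inl r₁)) =
      (Sum.elim (fun u => charmatrix A u r₁) (fun _ => (0 : ℝ[X]))) +
        (-1 : ℝ[X]) • (Pi.single (Sum.inr r₂) 1 : V₁ ⊕ V₂ → ℝ[X]) := by
    funext i
    rcases i with u | v
    · simp [hQdef, updateCol_apply, hNl,
        Pi.single_eq_of_ne (fun hh : Sum.inl u = Sum.inr r₂ => by simp at hh)]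
    · by_cases h : v = r₂
      · subst h; simp [hQdef, updateCol_apply, hNrl]
      · simp [hQdef, updateCol_apply, hNrl, h,
          Pi.single_eq_of_ne (fun hh : Sum.inr v = Sum.inr r₂ => h (by simpa using hh))]
  have h2 : Q.det =
      (Q.updateCol (Sum.inl r₁)
        (Sum.elim (fun u => charmatrix A u r₁) (fun _ => (0 : ℝ[X])))).det
      + (-1 : ℝ[X]) * (Q.updateCol (Sum.inl r₁) (Pi.single (Sum.inr r₂) 1)).det := by
    conv_lhs => rw [← updateCol_eq_self Q (Sum.inl r₁), hcol2]
    rw [det_updateCol_add, det_updateCol_smul]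
  -- term 2a is zero
  have hT2a : (Q.updateCol (Sum.inl r₁)
      (Sum.elim (fun u => charmatrix A u r₁) (fun _ => (0 : ℝ[X])))).det = 0 := by
    have he : Q.updateCol (Sum.inl r₁)
        (Sum.elim (fun u => charmatrix A u r₁) (fun _ => (0 : ℝ[X]))) =
        fromBlocks (charmatrix A)
          (fun u w => if w = r₂ then (if u = r₁ then (1 : ℝ[X]) else 0) else 0) 0
          ((charmatrix B).updateCol r₂ (fun _ => 0)) := by
      ext i j
      rcases i with u | v <;> rcases j with w | w <;>
        simp only [updateCol_apply, fromBlocks, Matrix.of_apply, Sum.elim_inl, Sum.elim_inr,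
          Sum.inl.injEq, Sum.inr.injEq, reduceCtorEq, Matrix.zero_apply]
      · by_cases h : w = r₁
        · subst h; simp [hNl]
        · simp [h, hQdef, updateCol_apply, hNl]
      · by_cases h : w = r₂
        · subst h
          by_cases h2 : u = r₁ <;> simp [hQdef, updateCol_apply, h2, Pi.single_apply]
        · simp [h, hQdef, updateCol_apply, hNlr]
      · by_cases h : w = r₁
        · subst h; simp
        · simp [h, hQdef, updateCol_apply, hNrl, h]
      · by_cases h : w = r₂
        · subst h
          simp [hQdef, updateCol_apply,
            Pi.single_eq_of_ne (fun hh : Sum.inr v = Sum.inl r₁ => by simp at hh)]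
        · simp [h, hQdef, updateCol_apply, hNr]
    rw [he]; refine (det_fromBlocks_zero₂₁ _ _ _).trans ?_
    have : ((charmatrix B).updateCol r₂ (fun _ => (0:ℝ[X]))).det = 0 := by
      apply det_eq_zero_of_column_eq_zero r₂
      intro i; simp [updateCol_apply]
    rw [this, mul_zero]
  -- term 2b
  have hT2b : (Q.updateCol (Sum.inl r₁) (Pi.single (Sum.inr r₂) 1)).det =
      -(phiDel A r₁ * phiDel B r₂) := by
    set R := Q.updateCol (Sum.inl r₁) (Pi.single (Sum.inr r₂) 1) with hRdef
    set σ : Equiv.Perm (V₁ ⊕ V₂) := Equiv.swap (Sum.inl r₁) (Sum.inr r₂) with hσ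
    have hswap : (R.submatrix id σ) =
        fromBlocks ((charmatrix A).updateCol r₁ (Pi.single r₁ 1)) 0 0
          ((charmatrix B).updateCol r₂ (Pi.single r₂ 1)) := by
      ext i j
      rcases i with u | v <;> rcases j with w | w <;>
        simp only [submatrix_apply, id_eq, fromBlocks, Matrix.of_apply, Sum.elim_inl, Sum.elim_inr,
          Matrix.zero_apply]
      · by_cases h : w = r₁
        · rw [h, hσ, Equiv.swap_apply_left]
          simp [hRdef, updateCol_apply, hQdef, Pi.single_apply]
        · rw [hσ, Equiv.swap_apply_of_ne_of_ne (by simp [h]) (by simp)]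
          simp [hRdef, updateCol_apply, h, hQdef, hNl]
      · by_cases h : w = r₂
        · rw [h, hσ, Equiv.swap_apply_right]
          simp [hRdef, updateCol_apply,
            Pi.single_eq_of_ne (fun hh : Sum.inl u = Sum.inr r₂ => by simp at hh)]
        · rw [hσ, Equiv.swap_apply_of_ne_of_ne (by simp) (by simp [h])]
          simp [hRdef, updateCol_apply, h, hQdef, hNlr]
      · by_cases h : w = r₁
        · rw [h, hσ, Equiv.swap_apply_left]
          simp [hRdef, updateCol_apply, hQdef, Pi.single_apply,
            Pi.single_eq_of_ne (fun hh : Sum.inr v = Sum.inl r₁ => by simp at hh)]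
        · rw [hσ, Equiv.swap_apply_of_ne_of_ne (by simp [h]) (by simp)]
          simp [hRdef, updateCol_apply, h, hQdef, hNrl]
      · by_cases h : w = r₂
        · rw [h, hσ, Equiv.swap_apply_right]
          simp [hRdef, updateCol_apply, hQdef, Pi.single_apply]
        · rw [hσ, Equiv.swap_apply_of_ne_of_ne (by simp) (by simp [h])]
          simp [hRdef, updateCol_apply, h, hQdef, hNr]
    have hsign : Matrix.det (R.submatrix id σ) = -R.det := by
      rw [det_permute']
      rw [hσ, Equiv.Perm.sign_swap (by simp)]
      simp
    rw [hswap, det_fromBlocks_zero₂₁, det_updateColumn_single_self,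
      det_updateColumn_single_self, ← phiDel_eq_det, ← phiDel_eq_det] at hsign
    linear_combination hsign
  rw [hphi, h1, hT1, h2, hT2a, hT2b]
  ring

lemma charpoly_submatrix {V W : Type} [Fintype V] [DecidableEq V] [Fintype W] [DecidableEq W]
    (M : Matrix V V ℝ) (e : W ≃ V) : (M.submatrix e e).charpoly = M.charpoly := by
  have := Matrix.charpoly_reindex (R := ℝ) e.symm M
  simpa [Matrix.reindex_apply] using this

lemma phi_submatrix {V W : Type} [Fintype V] [DecidableEq V] [Fintype W] [DecidableEq W]
    (M : Matrix V V ℝ) (e : W ≃ V) : phi (M.submatrix e e) = phi M :=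
  charpoly_submatrix M e

lemma phiDel_submatrix {V W : Type} [Fintype V] [DecidableEq V] [Fintype W] [DecidableEq W]
    (M : Matrix V V ℝ) (e : W ≃ V) (w : W) :
    phiDel (M.submatrix e e) w = phiDel M (e w) := by
  let f : {u : W // u ≠ w} ≃ {x : V // x ≠ e w} :=
    e.subtypeEquiv (fun u => not_congr ⟨fun h => by rw [h], fun h => e.injective h⟩)
  unfold phiDel
  have h : ((M.submatrix e e).submatrix (fun u : {u : W // u ≠ w} => (u : W))
        (fun u : {u : W // u ≠ w} => (u : W)))
      = ((M.submatrix (fun x : {x : V // x ≠ e w} => (x : V))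
          (fun x : {x : V // x ≠ e w} => (x : V))).submatrix f f) := by
    ext i j; rfl
  rw [h]
  exact charpoly_submatrix _ f

lemma alpha_submatrix {V W : Type} [Fintype V] [DecidableEq V] [Fintype W] [DecidableEq W]
    (M : Matrix V V ℝ) (e : W ≃ V) (w : W) :
    alpha (M.submatrix e e) w = alpha M (e w) := by
  rw [alpha, alpha, phi_submatrix, phiDel_submatrix]

lemma phiDel_join {V₁ V₂ : Type} [Fintype V₁] [Fintype V₂] [DecidableEq V₁] [DecidableEq V₂]
    (A : Matrix V₁ V₁ ℝ) (B : Matrix V₂ V₂ ℝ) (r₁ : V₁) (r₂ : V₂) :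
    phiDel (joinMat A B r₁ r₂) (Sum.inl r₁) = phiDel A r₁ * phi B := by
  classical
  let f : {u : V₁ ⊕ V₂ // u ≠ Sum.inl r₁} ≃ ({x : V₁ // x ≠ r₁} ⊕ V₂) :=
    { toFun := fun u => match u with
        | ⟨Sum.inl x, h⟩ => Sum.inl ⟨x, fun hh => h (by rw [hh])⟩
        | ⟨Sum.inr v, _⟩ => Sum.inr v
      invFun := Sum.elim (fun x => ⟨Sum.inl (x : V₁), by simp [x.2]⟩)
        (fun v => ⟨Sum.inr v, by simp⟩)
      left_inv := by rintro ⟨x | v, h⟩ <;> rfl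
      right_inv := by rintro (x | v) <;> rfl }
  have h : ((joinMat A B r₁ r₂).submatrix
        (fun u : {u : V₁ ⊕ V₂ // u ≠ Sum.inl r₁} => (u : V₁ ⊕ V₂))
        (fun u : {u : V₁ ⊕ V₂ // u ≠ Sum.inl r₁} => (u : V₁ ⊕ V₂)))
      = ((fromBlocks (A.submatrix (fun x : {x : V₁ // x ≠ r₁} => (x : V₁))
            (fun x : {x : V₁ // x ≠ r₁} => (x : V₁))) 0 0 B).submatrix f f) := by
    ext i j
    rcases i with ⟨x | x, hi⟩ <;> rcases j with ⟨y | y, hj⟩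
    · rfl
    · have hx : x ≠ r₁ := fun hh => hi (by rw [hh])
      simp [f, joinMat, fromBlocks, hx]
    · have hy : y ≠ r₁ := fun hh => hj (by rw [hh])
      simp [f, joinMat, fromBlocks, hy]
    · rfl
  rw [phiDel, h, charpoly_submatrix _ f, charpoly_fromBlocks_zero₁₂]
  rfl

lemma alpha_join {V₁ V₂ : Type} [Fintype V₁] [Fintype V₂] [DecidableEq V₁] [DecidableEq V₂]
    (A : Matrix V₁ V₁ ℝ) (B : Matrix V₂ V₂ ℝ) (r₁ : V₁) (r₂ : V₂) :
    alpha (joinMat A B r₁ r₂) (Sum.inl r₁) = alpha A r₁ - 1 / alpha B r₂ := by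
  have hφB : algebraMap (Polynomial ℝ) (RatFunc ℝ) (phi B) ≠ 0 :=
    RatFunc.algebraMap_ne_zero (Matrix.charpoly_monic B).ne_zero
  have hdA : algebraMap (Polynomial ℝ) (RatFunc ℝ) (phiDel A r₁) ≠ 0 :=
    RatFunc.algebraMap_ne_zero (Matrix.charpoly_monic _).ne_zero
  have hdB : algebraMap (Polynomial ℝ) (RatFunc ℝ) (phiDel B r₂) ≠ 0 :=
    RatFunc.algebraMap_ne_zero (Matrix.charpoly_monic _).ne_zero
  rw [alpha, alpha, alpha, phi_join, phiDel_join, map_sub, _root_.map_mul, _root_.map_mul, _root_.map_mul]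
  field_simp

def splitEquiv {n : ℕ} (V : Fin (n + 1) → Type) :
    ((i : Fin (n + 1)) × V i) ≃ (V 0 ⊕ ((j : Fin n) × V j.succ)) where
  toFun := fun p => Fin.cases (motive := fun i => V i → (V 0 ⊕ ((j : Fin n) × V j.succ)))
    (fun x => Sum.inl x) (fun j x => Sum.inr ⟨j, x⟩) p.1 p.2
  invFun := Sum.elim (fun x => ⟨0, x⟩) (fun q => ⟨q.1.succ, q.2⟩)
  left_inv := by
    rintro ⟨i, x⟩
    induction i using Fin.cases <;> simp
  right_inv := by rintro (x | ⟨j, x⟩) <;> simp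

section adj

variable {n : ℕ} {V : Fin (n + 1 + 1) → Type} (G : ∀ i, SimpleGraph (V i)) (r : ∀ i, V i)

lemma adj_ll (x y : V 0) :
    (decoratedPath G r).Adj ⟨0, x⟩ ⟨0, y⟩ ↔ (G 0).Adj x y := by
  rw [decoratedPath, SimpleGraph.fromRel_adj]
  constructor
  · rintro ⟨hne, (⟨i, u, v, h1, h2, hadj⟩ | ⟨hsum, -⟩) | (⟨i, u, v, h1, h2, hadj⟩ | ⟨hsum, -⟩)⟩
    · cases h1; cases h2; exact hadj
    · simp at hsum
    · cases h1; cases h2; exact hadj.symm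
    · simp at hsum
  · intro h
    refine ⟨fun hh => ?_, Or.inl (Or.inl ⟨0, x, y, rfl, rfl, h⟩)⟩
    obtain ⟨-, h2⟩ := Sigma.mk.inj_iff.mp hh
    exact h.ne (eq_of_heq h2)

lemma adj_lr (x : V 0) (j : Fin (n + 1)) (y : V j.succ) :
    (decoratedPath G r).Adj ⟨0, x⟩ ⟨j.succ, y⟩ ↔ (j = 0 ∧ x = r 0 ∧ y = r j.succ) := by
  rw [decoratedPath, SimpleGraph.fromRel_adj]
  constructor
  · rintro ⟨hne, (⟨i, u, v, h1, h2, hadj⟩ | ⟨hsum, ha, hb⟩) |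
      (⟨i, u, v, h1, h2, hadj⟩ | ⟨hsum, -⟩)⟩
    · cases h1; exact absurd (congrArg Sigma.fst h2) (Fin.succ_ne_zero j)
    · refine ⟨?_, ha, hb⟩
      simp only [Fin.val_zero, Fin.val_succ] at hsum
      exact Fin.ext (by simp only [Fin.val_zero]; omega)
    · cases h1; exact absurd (congrArg Sigma.fst h2) (Fin.succ_ne_zero j).symm
    · simp only [Fin.val_zero, Fin.val_succ] at hsum; omega
  · rintro ⟨rfl, hx, hy⟩
    refine ⟨fun hh => absurd (congrArg Sigma.fst hh) (by simp [Fin.ext_iff]), ?_⟩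
    exact Or.inl (Or.inr ⟨by simp, hx, hy⟩)

lemma adj_rl (x : V 0) (j : Fin (n + 1)) (y : V j.succ) :
    (decoratedPath G r).Adj ⟨j.succ, y⟩ ⟨0, x⟩ ↔ (j = 0 ∧ x = r 0 ∧ y = r j.succ) := by
  rw [SimpleGraph.adj_comm]; exact adj_lr G r x j y

lemma adj_rr (i j : Fin (n + 1)) (x : V i.succ) (y : V j.succ) :
    (decoratedPath G r).Adj ⟨i.succ, x⟩ ⟨j.succ, y⟩ ↔
      (decoratedPath (fun k : Fin (n + 1) => G k.succ) (fun k => r k.succ)).Adj ⟨i, x⟩ ⟨j, y⟩ := by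
  rw [decoratedPath, decoratedPath, SimpleGraph.fromRel_adj, SimpleGraph.fromRel_adj]
  have hne : (⟨i.succ, x⟩ : (i : Fin (n+1+1)) × V i) ≠ ⟨j.succ, y⟩ ↔
      (⟨i, x⟩ : (k : Fin (n+1)) × V k.succ) ≠ ⟨j, y⟩ := by
    constructor
    · intro h hh
      apply h
      obtain ⟨h1, h2⟩ := Sigma.mk.inj_iff.mp hh
      subst h1
      rw [eq_of_heq h2]
    · intro h hh
      apply h
      obtain ⟨h1, h2⟩ := Sigma.mk.inj_iff.mp hh
      rw [Fin.succ_inj] at h1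
      subst h1
      rw [eq_of_heq h2]
  have hrel : ∀ (a b : Fin (n+1)) (u : V a.succ) (v : V b.succ),
      ((∃ (k : Fin (n+1+1)) (p q : V k),
          (⟨a.succ, u⟩ : (i : Fin (n+1+1)) × V i) = ⟨k, p⟩ ∧
          (⟨b.succ, v⟩ : (i : Fin (n+1+1)) × V i) = ⟨k, q⟩ ∧ (G k).Adj p q) ∨
        ((a.succ : ℕ) + 1 = (b.succ : ℕ) ∧ u = r a.succ ∧ v = r b.succ)) ↔
      ((∃ (k : Fin (n+1)) (p : V k.succ) (q : V k.succ),
          (⟨a, u⟩ : (k : Fin (n+1)) × V k.succ) = ⟨k, p⟩ ∧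
          (⟨b, v⟩ : (k : Fin (n+1)) × V k.succ) = ⟨k, q⟩ ∧ (G k.succ).Adj p q) ∨
        ((a : ℕ) + 1 = (b : ℕ) ∧ u = r a.succ ∧ v = r b.succ)) := by
    intro a b u v
    constructor
    · rintro (⟨k, p, q, h1, h2, hadj⟩ | ⟨hsum, hu, hv⟩)
      · cases h1
        obtain ⟨h1', h2'⟩ := Sigma.mk.inj_iff.mp h2
        exact Or.inl ⟨a, u, q, rfl,
          Sigma.mk.inj_iff.mpr ⟨Fin.succ_inj.mp h1', h2'⟩, hadj⟩
      · simp only [Fin.val_succ] at hsum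
        exact Or.inr ⟨by omega, hu, hv⟩
    · rintro (⟨k, p, q, h1, h2, hadj⟩ | ⟨hsum, hu, hv⟩)
      · cases h1
        obtain ⟨h1', h2'⟩ := Sigma.mk.inj_iff.mp h2
        exact Or.inl ⟨a.succ, u, q, rfl,
          Sigma.mk.inj_iff.mpr ⟨by rw [h1'], h2'⟩, hadj⟩
      · exact Or.inr ⟨by simp [Fin.val_succ]; omega, hu, hv⟩
  rw [hne, hrel, hrel]

end adj

lemma ite_congr_real {p q : Prop} [Decidable p] [Decidable q] (h : p ↔ q) :
    (if p then (1:ℝ) else 0) = if q then 1 else 0 := by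
  by_cases hc : q
  · rw [if_pos (h.mpr hc), if_pos hc]
  · rw [if_neg (fun hh => hc (h.mp hh)), if_neg hc]

lemma adj_one {V : Fin 1 → Type} (G : ∀ i, SimpleGraph (V i)) (r : ∀ i, V i) (x y : V 0) :
    (decoratedPath G r).Adj ⟨0, x⟩ ⟨0, y⟩ ↔ (G 0).Adj x y := by
  rw [decoratedPath, SimpleGraph.fromRel_adj]
  constructor
  · rintro ⟨hne, (⟨i, u, v, h1, h2, hadj⟩ | ⟨hsum, -⟩) | (⟨i, u, v, h1, h2, hadj⟩ | ⟨hsum, -⟩)⟩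
    · cases h1; cases h2; exact hadj
    · simp at hsum
    · cases h1; cases h2; exact hadj.symm
    · simp at hsum
  · intro h
    refine ⟨fun hh => ?_, Or.inl (Or.inl ⟨0, x, y, rfl, rfl, h⟩)⟩
    obtain ⟨-, h2⟩ := Sigma.mk.inj_iff.mp hh
    exact h.ne (eq_of_heq h2)

def oneEquiv (V : Fin 1 → Type) : ((i : Fin 1) × V i) ≃ V 0 :=
  (splitEquiv V).trans (Equiv.sumEmpty _ _)

lemma adjMat_one {V : Fin 1 → Type} (G : ∀ i, SimpleGraph (V i)) (r : ∀ i, V i) :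
    adjMat (decoratedPath G r) = (adjMat (G 0)).submatrix (oneEquiv V) (oneEquiv V) := by
  classical
  ext a b
  obtain ⟨i, x⟩ := a; obtain ⟨j, y⟩ := b
  obtain rfl : i = 0 := Subsingleton.elim _ _
  obtain rfl : j = 0 := Subsingleton.elim _ _
  have h := adj_one G r x y
  simp only [adjMat, submatrix_apply, oneEquiv, splitEquiv, Equiv.trans_apply, Equiv.coe_fn_mk,
    Fin.cases_zero, Equiv.sumEmpty_apply_inl]
  split_ifs with h1 h2 <;> simp_all

lemma adjMat_step {n : ℕ} {V : Fin (n + 1 + 1) → Type} (G : ∀ i, SimpleGraph (V i))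
    (r : ∀ i, V i) :
    adjMat (decoratedPath G r) =
      (joinMat (adjMat (G 0))
        (adjMat (decoratedPath (fun k : Fin (n + 1) => G k.succ) (fun k => r k.succ)))
        (r 0) ⟨0, r (Fin.succ 0)⟩).submatrix (splitEquiv V) (splitEquiv V) := by
  classical
  ext a b
  obtain ⟨i, x⟩ := a; obtain ⟨j, y⟩ := b
  induction i using Fin.cases with
  | zero =>
    induction j using Fin.cases with
    | zero =>
      simp only [adjMat, joinMat, fromBlocks, submatrix_apply, splitEquiv, Equiv.coe_fn_mk,
        Fin.cases_zero, Sum.elim_inl, Matrix.of_apply]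
      have h := adj_ll G r x y
      split_ifs with h1 h2 <;> simp_all
    | succ j =>
      have hiff : (j = 0 ∧ x = r 0 ∧ y = r j.succ) ↔
          (x = r 0 ∧ (⟨j, y⟩ : (k : Fin (n + 1)) × V k.succ) = ⟨0, r (Fin.succ 0)⟩) := by
        constructor
        · rintro ⟨rfl, hx, hy⟩; exact ⟨hx, by rw [hy]⟩
        · rintro ⟨hx, h⟩
          obtain ⟨h1, h2⟩ := Sigma.mk.inj_iff.mp h
          subst h1
          exact ⟨rfl, hx, eq_of_heq h2⟩
      simp only [adjMat, joinMat, fromBlocks, submatrix_apply, splitEquiv, Equiv.coe_fn_mk,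
        Fin.cases_zero, Fin.cases_succ, Sum.elim_inl, Sum.elim_inr, Matrix.of_apply]
      have h := (adj_lr G r x j y).trans hiff
      split_ifs with h1 h2 <;> simp_all
  | succ i =>
    induction j using Fin.cases with
    | zero =>
      have hiff : (i = 0 ∧ y = r 0 ∧ x = r i.succ) ↔
          ((⟨i, x⟩ : (k : Fin (n + 1)) × V k.succ) = ⟨0, r (Fin.succ 0)⟩ ∧ y = r 0) := by
        constructor
        · rintro ⟨rfl, hy, hx⟩; exact ⟨by rw [hx], hy⟩
        · rintro ⟨h, hy⟩
          obtain ⟨h1, h2⟩ := Sigma.mk.inj_iff.mp h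
          subst h1
          exact ⟨rfl, hy, eq_of_heq h2⟩
      simp only [adjMat, joinMat, fromBlocks, submatrix_apply, splitEquiv, Equiv.coe_fn_mk,
        Fin.cases_zero, Fin.cases_succ, Sum.elim_inl, Sum.elim_inr, Matrix.of_apply]
      have h := (adj_rl G r y i x).trans hiff
      split_ifs with h1 h2 <;> simp_all
    | succ j =>
      simp only [adjMat, joinMat, fromBlocks, submatrix_apply, splitEquiv, Equiv.coe_fn_mk,
        Fin.cases_succ, Sum.elim_inr, Matrix.of_apply]
      have h := adj_rr G r i j x y
      split_ifs with h1 h2 <;> simp_all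

lemma main_lemma : ∀ (n : ℕ) (V : Fin (n + 1) → Type) [∀ i, Fintype (V i)]
    [∀ i, DecidableEq (V i)] (G : ∀ i, SimpleGraph (V i)) (r : ∀ i, V i),
    alpha (adjMat (decoratedPath G r)) ⟨0, r 0⟩ =
      contFrac (List.ofFn (fun i : Fin (n + 1) => alpha (adjMat (G i)) (r i))) := by
  intro n
  induction n with
  | zero =>
    intro V _ _ G r
    rw [adjMat_one G r, alpha_submatrix]
    have h0 : (oneEquiv V) ⟨0, r 0⟩ = r 0 := by
      simp [oneEquiv, splitEquiv]
    rw [h0]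
    simp [contFrac, List.ofFn_succ]
  | succ m IH =>
    intro V _ _ G r
    rw [adjMat_step G r, alpha_submatrix]
    have h0 : (splitEquiv V) ⟨0, r 0⟩ = Sum.inl (r 0) := by
      simp [splitEquiv]
    rw [h0, alpha_join, IH _ (fun k => G k.succ) (fun k => r k.succ)]
    conv_rhs => rw [List.ofFn_succ]
    simp only [contFrac]


/-- the continued-fraction expansion of `α₁^G` for a decorated path. -/
theorem statement_0 {n : ℕ} (hn : 0 < n) {V : Fin n → Type}
    [∀ i, Fintype (V i)] [∀ i, DecidableEq (V i)]
    (G : ∀ i, SimpleGraph (V i)) (r : ∀ i, V i) :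
    alpha (adjMat (decoratedPath G r)) ⟨⟨0, hn⟩, r ⟨0, hn⟩⟩ =
      contFrac (List.ofFn (fun i : Fin n => alpha (adjMat (G i)) (r i))) := by
  cases n with
  | zero => omega
  | succ m =>
    have h0 : (⟨0, hn⟩ : Fin (m + 1)) = 0 := Fin.mk_zero
    rw [h0]
    exact main_lemma m V G r

end
end

section
/- Let G be a finite simple graph and let i ≠ j be strongly cospectral vertices of G such that every eigenvalue of A(G) in the eigenvalue support of i is an integer. Then it is impossible that every eigenvalue in Φ^+_{ij}(G) is even while every eigenvalue in Φ^−_{ij}(G) is odd, and it is likewise impossible that every eigenvalue in Φ^+_{ij}(G) is odd while every eigenvalue in Φ^−_{ij}(G) is even. -/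
open Polynomial Matrix

noncomputable section

namespace Stmt11Aux

variable {V : Type} [Fintype V] [DecidableEq V]

lemma pow_mulVec (M : Matrix V V ℝ) {x : V → ℝ} {θ : ℝ} (hx : M *ᵥ x = θ • x) (n : ℕ) :
    (M ^ n) *ᵥ x = θ ^ n • x := by
  induction n with
  | zero => simp [Matrix.one_mulVec]
  | succ n ih =>
      rw [pow_succ, ← Matrix.mulVec_mulVec, hx, Matrix.mulVec_smul, ih, pow_succ]
      rw [smul_smul, mul_comm]

lemma aeval_mulVec (M : Matrix V V ℝ) {x : V → ℝ} {θ : ℝ} (hx : M *ᵥ x = θ • x)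
    (p : Polynomial ℝ) : (Polynomial.aeval M p) *ᵥ x = p.eval θ • x := by
  induction p using Polynomial.induction_on' with
  | add p q hp hq => rw [map_add, Matrix.add_mulVec, hp, hq, eval_add, add_smul]
  | monomial n a =>
      rw [aeval_monomial, eval_monomial, Algebra.algebraMap_eq_smul_one, smul_mul_assoc,
        one_mul, Matrix.smul_mulVec, pow_mulVec M hx, smul_smul]

lemma exists_annihilating (M : Matrix V V ℝ) (hM : M.IsHermitian) (w : V → ℝ) :
    ∃ s : Finset ℝ,
      (∀ θ ∈ s, ∃ x : V → ℝ, M *ᵥ x = θ • x ∧ ∑ v, x v * w v ≠ 0) ∧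
      (Polynomial.aeval M (∏ θ ∈ s, (X - C θ))) *ᵥ w = 0 := by
  set lam := hM.eigenvalues with hlam
  set u : V → V → ℝ := fun k => ⇑(hM.eigenvectorBasis k) with hu
  have heig : ∀ k, M *ᵥ u k = lam k • u k := fun k => hM.mulVec_eigenvectorBasis k
  set c : V → ℝ := fun k => hM.eigenvectorBasis.repr (WithLp.toLp 2 w) k with hc
  have hrepr : ∀ k : V, c k = ∑ v, u k v * w v := by
    intro k
    show hM.eigenvectorBasis.repr (WithLp.toLp 2 w) k = _
    rw [hM.eigenvectorBasis.repr_apply_apply (WithLp.toLp 2 w) k]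
    simp [PiLp.inner_apply, RCLike.inner_apply, mul_comm, hu]
  have hw : ∑ k, c k • u k = w := by
    have := congrArg WithLp.ofLp (hM.eigenvectorBasis.sum_repr (WithLp.toLp 2 w))
    simpa [hu, hc] using this
  refine ⟨(Finset.univ.filter fun k => c k ≠ 0).image lam, ?_, ?_⟩
  · intro θ hθ
    obtain ⟨k, hk, rfl⟩ := Finset.mem_image.1 hθ
    rw [Finset.mem_filter] at hk
    refine ⟨u k, heig k, ?_⟩
    rw [← hrepr k]
    exact hk.2
  · set p : Polynomial ℝ := ∏ θ ∈ (Finset.univ.filter fun k => c k ≠ 0).image lam, (X - C θ)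
      with hp
    calc (Polynomial.aeval M p) *ᵥ w
        = (Polynomial.aeval M p).mulVecLin (∑ k, c k • u k) := by
          rw [hw, Matrix.mulVecLin_apply]
      _ = ∑ k, c k • ((Polynomial.aeval M p) *ᵥ u k) := by
          rw [map_sum]
          refine Finset.sum_congr rfl fun k _ => ?_
          rw [_root_.map_smul, Matrix.mulVecLin_apply]
      _ = 0 := by
          refine Finset.sum_eq_zero fun k _ => ?_
          by_cases hck : c k = 0
          · rw [hck, zero_smul]
          · rw [aeval_mulVec M (heig k) p]
            have : p.eval (lam k) = 0 := by
              rw [hp, eval_prod]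
              refine Finset.prod_eq_zero (Finset.mem_image_of_mem lam
                (Finset.mem_filter.2 ⟨Finset.mem_univ k, hck⟩)) ?_
              simp
            rw [this, zero_smul, smul_zero]


open Classical in
def intAdj {V : Type} (G : SimpleGraph V) : Matrix V V ℤ :=
  fun a b => if G.Adj a b then 1 else 0

lemma intAdj_map (G : SimpleGraph V) :
    (intAdj G).map (Int.cast : ℤ → ℝ) = adjMat G := by
  funext a b
  by_cases h : G.Adj a b <;> simp [intAdj, adjMat, Matrix.map_apply, h]

lemma adj_herm (G : SimpleGraph V) : (adjMat G).IsHermitian := by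
  rw [Matrix.IsHermitian]
  funext a b
  by_cases h : G.Adj a b
  · have h' : G.Adj b a := h.symm
    simp [Matrix.conjTranspose_apply, adjMat, h, h']
  · have h' : ¬ G.Adj b a := fun hh => h hh.symm
    simp [Matrix.conjTranspose_apply, adjMat, h, h']

lemma annihilate_int (G : SimpleGraph V) (s : Finset ℝ) (w : V → ℤ)
    (hs : ∀ θ ∈ s, ∃ z : ℤ, θ = (z : ℝ))
    (h : (Polynomial.aeval (adjMat G) (∏ θ ∈ s, (X - C θ))) *ᵥ (fun v => ((w v) : ℝ)) = 0) :
    ∃ t : Finset ℤ, (∀ z ∈ t, ((z : ℝ)) ∈ s) ∧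
      (Polynomial.aeval (intAdj G) (∏ z ∈ t, (X - C z))) *ᵥ w = 0 := by
  have key : ∀ θ ∈ s, ((⌊θ⌋ : ℤ) : ℝ) = θ := by
    intro θ hθ
    obtain ⟨z, rfl⟩ := hs θ hθ
    rw [Int.floor_intCast]
  refine ⟨s.image (fun θ => ⌊θ⌋), ?_, ?_⟩
  · intro z hz
    obtain ⟨θ, hθ, rfl⟩ := Finset.mem_image.1 hz
    rwa [key θ hθ]
  · set t := s.image (fun θ => ⌊θ⌋) with ht
    set P : Polynomial ℤ := ∏ z ∈ t, (X - C z) with hP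
    have hprod : ∏ z ∈ t, (X - C ((z : ℤ) : ℝ)) = ∏ θ ∈ s, (X - C θ) := by
      rw [ht, Finset.prod_image]
      · exact Finset.prod_congr rfl fun θ hθ => by rw [key θ hθ]
      · intro θ hθ θ' hθ' hee
        rw [← key θ hθ, ← key θ' hθ', show ⌊θ⌋ = ⌊θ'⌋ from hee]
    have hmap : P.map (Int.castRingHom ℝ) = ∏ θ ∈ s, (X - C θ) := by
      rw [hP, Polynomial.map_prod, ← hprod]
      exact Finset.prod_congr rfl fun z _ => by
        rw [Polynomial.map_sub, Polynomial.map_X, Polynomial.map_C]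
        norm_num
    set φ : Matrix V V ℤ →ₐ[ℤ] Matrix V V ℝ :=
      ((Int.castRingHom ℝ).mapMatrix).toIntAlgHom with hφ
    have hA : (Polynomial.aeval (intAdj G) P).map (Int.cast : ℤ → ℝ)
        = Polynomial.aeval (adjMat G) (∏ θ ∈ s, (X - C θ)) := by
      have e1 : (Polynomial.aeval (intAdj G) P).map (Int.cast : ℤ → ℝ)
          = φ (Polynomial.aeval (intAdj G) P) := rfl
      rw [e1, ← Polynomial.aeval_algHom_apply φ (intAdj G) P]
      have e2 : φ (intAdj G) = adjMat G := by
        rw [hφ]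
        exact intAdj_map G
      rw [e2, ← hmap]
      have e3 : Int.castRingHom ℝ = algebraMap ℤ ℝ := rfl
      rw [e3, Polynomial.aeval_map_algebraMap]
    have hv : ∀ v, (((Polynomial.aeval (intAdj G) P *ᵥ w) v : ℤ) : ℝ) = 0 := by
      intro v
      have h' := RingHom.map_mulVec (Int.castRingHom ℝ) (Polynomial.aeval (intAdj G) P) w v
      have e4 : (⇑(Int.castRingHom ℝ) ∘ w) = fun v => ((w v : ℤ) : ℝ) := rfl
      have e5 : ((Polynomial.aeval (intAdj G) P).map (Int.castRingHom ℝ))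
          = (Polynomial.aeval (intAdj G) P).map (Int.cast : ℤ → ℝ) := rfl
      rw [e4, e5, hA, h] at h'
      simpa using h'
    funext v
    simp only [Pi.zero_apply]
    exact_mod_cast hv v

lemma int_to_zmod (N : Matrix V V ℤ) (P : Polynomial ℤ) (w : V → ℤ)
    (h : (Polynomial.aeval N P) *ᵥ w = 0) :
    (Polynomial.aeval (N.map (Int.cast : ℤ → ZMod 2)) P) *ᵥ (fun v => ((w v : ZMod 2))) = 0 := by
  set ψ : Matrix V V ℤ →ₐ[ℤ] Matrix V V (ZMod 2) :=
    ((Int.castRingHom (ZMod 2)).mapMatrix).toIntAlgHom with hψ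
  have e1 : Polynomial.aeval (N.map (Int.cast : ℤ → ZMod 2)) P
      = (Polynomial.aeval N P).map (Int.cast : ℤ → ZMod 2) := by
    have : N.map (Int.cast : ℤ → ZMod 2) = ψ N := rfl
    rw [this, Polynomial.aeval_algHom_apply ψ N P]
    rfl
  rw [e1]
  funext v
  have h' := RingHom.map_mulVec (Int.castRingHom (ZMod 2)) (Polynomial.aeval N P) w v
  have e4 : (⇑(Int.castRingHom (ZMod 2)) ∘ w) = fun v => ((w v : ZMod 2)) := rfl
  rw [e4] at h'
  rw [show ((Polynomial.aeval N P).map (Int.cast : ℤ → ZMod 2))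
      = (Polynomial.aeval N P).map (Int.castRingHom (ZMod 2)) from rfl, ← h', h]
  simp

lemma map_prod_odd (t : Finset ℤ) (ht : ∀ z ∈ t, ∃ k : ℤ, z = 2 * k + 1) :
    (∏ z ∈ t, (X - C z) : Polynomial ℤ).map (Int.castRingHom (ZMod 2))
      = (X + 1) ^ t.card := by
  rw [Polynomial.map_prod]
  rw [Finset.prod_congr rfl (fun z hz => ?_), Finset.prod_const]
  obtain ⟨k, rfl⟩ := ht z hz
  rw [Polynomial.map_sub, Polynomial.map_X, Polynomial.map_C]
  rw [CharTwo.sub_eq_add]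
  congr 1
  rw [show ((Int.castRingHom (ZMod 2)) (2 * k + 1) : ZMod 2) = 1 by
    rw [show ((Int.castRingHom (ZMod 2)) (2 * k + 1) : ZMod 2) = ((2 * k + 1 : ℤ) : ZMod 2) from
      rfl]
    push_cast
    rw [show ((2 : ZMod 2)) = 0 from by decide]
    ring]
  exact map_one C

lemma map_prod_even (t : Finset ℤ) (ht : ∀ z ∈ t, ∃ k : ℤ, z = 2 * k) :
    (∏ z ∈ t, (X - C z) : Polynomial ℤ).map (Int.castRingHom (ZMod 2))
      = X ^ t.card := by
  rw [Polynomial.map_prod]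
  rw [Finset.prod_congr rfl (fun z hz => ?_), Finset.prod_const]
  obtain ⟨k, rfl⟩ := ht z hz
  rw [Polynomial.map_sub, Polynomial.map_X, Polynomial.map_C]
  rw [show ((Int.castRingHom (ZMod 2)) (2 * k) : ZMod 2) = 0 by
    rw [show ((Int.castRingHom (ZMod 2)) (2 * k) : ZMod 2) = ((2 * k : ℤ) : ZMod 2) from rfl]
    push_cast
    rw [show ((2 : ZMod 2)) = 0 from by decide]
    ring]
  rw [map_zero, sub_zero]

lemma final_contradiction (B : Matrix V V (ZMod 2)) (u : V → ZMod 2) (l m : ℕ)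
    (h1 : (Polynomial.aeval B (((X : Polynomial (ZMod 2)) + 1) ^ m)) *ᵥ u = 0)
    (h2 : (Polynomial.aeval B ((X : Polynomial (ZMod 2)) ^ l)) *ᵥ u = 0) : u = 0 := by
  have hcop : IsCoprime ((X : Polynomial (ZMod 2)) ^ l) ((X + 1) ^ m) :=
    IsCoprime.pow (⟨-1, 1, by ring⟩ : IsCoprime (X : Polynomial (ZMod 2)) (X + 1))
  obtain ⟨f, g, hfg⟩ := hcop
  have hcal := congrArg (fun q : Polynomial (ZMod 2) => (Polynomial.aeval B q) *ᵥ u) hfg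
  simp only [_root_.map_add, _root_.map_mul, _root_.map_one, Matrix.add_mulVec,
    Matrix.one_mulVec, ← Matrix.mulVec_mulVec, h1, h2, Matrix.mulVec_zero, add_zero,
    zero_add] at hcal
  exact hcal.symm


lemma abstract_core (G : SimpleGraph V) (i : V) (w1 w2 : V → ℤ) (s1 s2 : Finset ℝ)
    (hodd : ∀ θ ∈ s1, ∃ z : ℤ, θ = 2 * (z : ℝ) + 1)
    (heven : ∀ θ ∈ s2, ∃ z : ℤ, θ = 2 * (z : ℝ))
    (h1 : (Polynomial.aeval (adjMat G) (∏ θ ∈ s1, (X - C θ))) *ᵥ (fun v => ((w1 v : ℝ))) = 0)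
    (h2 : (Polynomial.aeval (adjMat G) (∏ θ ∈ s2, (X - C θ))) *ᵥ (fun v => ((w2 v : ℝ))) = 0)
    (hmod : ∀ v, ((w1 v : ZMod 2)) = ((w2 v : ZMod 2)))
    (hne : ((w1 i : ZMod 2)) ≠ 0) : False := by
  obtain ⟨t1, ht1s, ht1⟩ := annihilate_int G s1 w1
    (fun θ hθ => by obtain ⟨z, hz⟩ := hodd θ hθ; exact ⟨2 * z + 1, by rw [hz]; push_cast; ring⟩) h1
  obtain ⟨t2, ht2s, ht2⟩ := annihilate_int G s2 w2
    (fun θ hθ => by obtain ⟨z, hz⟩ := heven θ hθ; exact ⟨2 * z, by rw [hz]; push_cast; ring⟩) h2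
  have hz1 : ∀ z ∈ t1, ∃ k : ℤ, z = 2 * k + 1 := by
    intro z hz
    obtain ⟨k, hk⟩ := hodd _ (ht1s z hz)
    exact ⟨k, by exact_mod_cast hk⟩
  have hz2 : ∀ z ∈ t2, ∃ k : ℤ, z = 2 * k := by
    intro z hz
    obtain ⟨k, hk⟩ := heven _ (ht2s z hz)
    exact ⟨k, by exact_mod_cast hk⟩
  set B : Matrix V V (ZMod 2) := (intAdj G).map (Int.cast : ℤ → ZMod 2) with hB
  set u : V → ZMod 2 := fun v => ((w1 v : ZMod 2)) with hu
  have hm1 := int_to_zmod (intAdj G) (∏ z ∈ t1, (X - C z)) w1 ht1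
  have hm2 := int_to_zmod (intAdj G) (∏ z ∈ t2, (X - C z)) w2 ht2
  have e1 : Polynomial.aeval B (∏ z ∈ t1, (X - C z) : Polynomial ℤ)
      = Polynomial.aeval B (((X : Polynomial (ZMod 2)) + 1) ^ t1.card) := by
    conv_lhs => rw [← Polynomial.aeval_map_algebraMap (ZMod 2) B
      (∏ z ∈ t1, (X - C z) : Polynomial ℤ)]
    rw [show algebraMap ℤ (ZMod 2) = Int.castRingHom (ZMod 2) from rfl, map_prod_odd t1 hz1]
  have e2 : Polynomial.aeval B (∏ z ∈ t2, (X - C z) : Polynomial ℤ)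
      = Polynomial.aeval B ((X : Polynomial (ZMod 2)) ^ t2.card) := by
    conv_lhs => rw [← Polynomial.aeval_map_algebraMap (ZMod 2) B
      (∏ z ∈ t2, (X - C z) : Polynomial ℤ)]
    rw [show algebraMap ℤ (ZMod 2) = Int.castRingHom (ZMod 2) from rfl, map_prod_even t2 hz2]
  rw [e1] at hm1
  rw [e2] at hm2
  have hu2 : (fun v => ((w2 v : ZMod 2))) = u := by
    funext v
    rw [hu, ← hmod v]
  rw [hu2] at hm2
  have := final_contradiction B u t2.card t1.card hm1 hm2
  exact hne (congrFun this i)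

end Stmt11Aux

/-- parity separation of `Φ⁺` and `Φ⁻` is impossible. -/
theorem statement_11 {V : Type} [Fintype V] (G : SimpleGraph V) (i j : V) (hij : i ≠ j)
    (hsc : StronglyCospectral (adjMat G) i j)
    (hint : ∀ θ : ℝ, InSupport (adjMat G) i θ → ∃ z : ℤ, θ = (z : ℝ)) :
    ¬ ((∀ θ ∈ PhiPlus (adjMat G) i j, ∃ z : ℤ, θ = 2 * (z : ℝ)) ∧
        (∀ θ ∈ PhiMinus (adjMat G) i j, ∃ z : ℤ, θ = 2 * (z : ℝ) + 1)) ∧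
    ¬ ((∀ θ ∈ PhiPlus (adjMat G) i j, ∃ z : ℤ, θ = 2 * (z : ℝ) + 1) ∧
        (∀ θ ∈ PhiMinus (adjMat G) i j, ∃ z : ℤ, θ = 2 * (z : ℝ))) := by
  classical
  set w1 : V → ℤ := fun v => (if v = i then 1 else 0) - (if v = j then 1 else 0) with hw1
  set w2 : V → ℤ := fun v => (if v = i then 1 else 0) + (if v = j then 1 else 0) with hw2
  have hsum1 : ∀ x : V → ℝ, ∑ v, x v * ((w1 v : ℝ)) = x i - x j := by
    intro x
    have hcast : ∀ v, ((w1 v : ℝ)) =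
        (if v = i then (1 : ℝ) else 0) - (if v = j then (1 : ℝ) else 0) := by
      intro v
      rw [hw1]
      push_cast [apply_ite (fun z : ℤ => (z : ℝ))]
      rfl
    simp only [hcast, mul_sub]
    rw [Finset.sum_sub_distrib]
    congr 1 <;> simp [mul_ite]
  have hsum2 : ∀ x : V → ℝ, ∑ v, x v * ((w2 v : ℝ)) = x i + x j := by
    intro x
    have hcast : ∀ v, ((w2 v : ℝ)) =
        (if v = i then (1 : ℝ) else 0) + (if v = j then (1 : ℝ) else 0) := by
      intro v
      rw [hw2]
      push_cast [apply_ite (fun z : ℤ => (z : ℝ))]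
      rfl
    simp only [hcast, mul_add]
    rw [Finset.sum_add_distrib]
    congr 1 <;> simp [mul_ite]
  have hmod : ∀ v, ((w1 v : ZMod 2)) = ((w2 v : ZMod 2)) := by
    intro v
    rw [ZMod.intCast_eq_intCast_iff, Int.modEq_iff_dvd]
    have hdiff : w2 v - w1 v = 2 * (if v = j then 1 else 0) := by
      rw [hw1, hw2]
      by_cases h2 : v = j <;> simp [h2] <;> ring
    rw [hdiff]
    exact dvd_mul_right 2 _
  have hne1 : ((w1 i : ZMod 2)) ≠ 0 := by
    have h1 : w1 i = 1 := by simp [hw1, hij]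
    rw [h1, Int.cast_one]
    exact one_ne_zero
  have hne2 : ((w2 i : ZMod 2)) ≠ 0 := by
    have h1 : w2 i = 1 := by simp [hw2, hij]
    rw [h1, Int.cast_one]
    exact one_ne_zero
  obtain ⟨s1, hs1, hann1⟩ := Stmt11Aux.exists_annihilating (adjMat G) (Stmt11Aux.adj_herm G)
    (fun v => ((w1 v : ℝ)))
  obtain ⟨s2, hs2, hann2⟩ := Stmt11Aux.exists_annihilating (adjMat G) (Stmt11Aux.adj_herm G)
    (fun v => ((w2 v : ℝ)))
  have hs1minus : ∀ θ ∈ s1, θ ∈ PhiMinus (adjMat G) i j := by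
    intro θ hθ
    obtain ⟨x, hx, hne0⟩ := hs1 θ hθ
    rw [hsum1 x] at hne0
    rcases hsc θ with hp | hm
    · exact absurd (by rw [hp x hx, sub_self]) hne0
    · have hxij := hm x hx
      have hxi : x i ≠ 0 := by
        intro h0
        have hxj : x j = 0 := by
          rw [h0] at hxij
          linarith
        exact hne0 (by rw [h0, hxj, sub_zero])
      exact ⟨⟨x, hx, hxi⟩, hm⟩
  have hs2plus : ∀ θ ∈ s2, θ ∈ PhiPlus (adjMat G) i j := by
    intro θ hθ
    obtain ⟨x, hx, hne0⟩ := hs2 θ hθ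
    rw [hsum2 x] at hne0
    rcases hsc θ with hp | hm
    · have hxij := hp x hx
      have hxi : x i ≠ 0 := by
        intro h0
        have hxj : x j = 0 := by
          rw [h0] at hxij
          linarith
        exact hne0 (by rw [h0, hxj, add_zero])
      exact ⟨⟨x, hx, hxi⟩, hp⟩
    · exact absurd (by rw [hm x hx]; ring) hne0
  constructor
  · rintro ⟨hplus, hminus⟩
    exact Stmt11Aux.abstract_core G i w1 w2 s1 s2
      (fun θ hθ => hminus θ (hs1minus θ hθ))
      (fun θ hθ => hplus θ (hs2plus θ hθ))
      hann1 hann2 hmod hne1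
  · rintro ⟨hplus, hminus⟩
    exact Stmt11Aux.abstract_core G i w2 w1 s2 s1
      (fun θ hθ => hplus θ (hs2plus θ hθ))
      (fun θ hθ => hminus θ (hs1minus θ hθ))
      hann2 hann1 (fun v => (hmod v).symm) hne2

end
end

section
/- Let G be a finite simple graph containing vertices u and v such that there is exactly one path in G from u to v, this path has length at least 7 (i.e. at least six internal vertices), and every internal vertex of the path has degree 2 in G. Then some eigenvalue of A(G) is not an integer; in particular G is not an integral graph. -/
open Polynomial Matrix

noncomputable section

section AuxStatement17

variable {V : Type} [Fintype V] [DecidableEq V] {G : SimpleGraph V}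

lemma adjMat_of_adj' {a b : V} (h : G.Adj a b) : adjMat G a b = 1 := by
  unfold adjMat; exact if_pos h

lemma adjMat_of_not_adj' {a b : V} (h : ¬ G.Adj a b) : adjMat G a b = 0 := by
  unfold adjMat; exact if_neg h

lemma nbhd_pair' [DecidableRel G.Adj] {x a b : V} (hxa : G.Adj x a) (hxb : G.Adj x b)
    (hab : a ≠ b) (hdeg : G.degree x = 2) : ∀ y, G.Adj x y ↔ (y = a ∨ y = b) := by
  have hsub : ({a, b} : Finset V) ⊆ G.neighborFinset x := by
    intro y hy
    simp only [Finset.mem_insert, Finset.mem_singleton] at hy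
    rcases hy with rfl | rfl <;> simpa [SimpleGraph.mem_neighborFinset]
  have hN : ({a, b} : Finset V) = G.neighborFinset x := by
    apply Finset.eq_of_subset_of_card_le hsub
    rw [SimpleGraph.card_neighborFinset_eq_degree, hdeg, Finset.card_pair hab]
  intro y
  rw [← SimpleGraph.mem_neighborFinset, ← hN]
  simp

lemma mulVec_single_pair' {x a b : V} (hab : a ≠ b)
    (hx : ∀ y, G.Adj x y ↔ (y = a ∨ y = b)) :
    adjMat G *ᵥ Pi.single x (1:ℝ) = Pi.single a 1 + Pi.single b 1 := by
  funext y
  rw [Matrix.mulVec_single]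
  show adjMat G y x * 1 = (Pi.single a 1 + Pi.single b 1 : V → ℝ) y
  rw [mul_one]
  have hyx : G.Adj y x ↔ (y = a ∨ y = b) := by rw [G.adj_comm]; exact hx y
  by_cases hya : y = a
  · subst hya
    rw [adjMat_of_adj' (hyx.mpr (Or.inl rfl))]
    simp [Pi.single_apply, hab]
  · by_cases hyb : y = b
    · subst hyb
      rw [adjMat_of_adj' (hyx.mpr (Or.inr rfl))]
      simp [Pi.single_apply, Ne.symm hab]
    · rw [adjMat_of_not_adj' (fun h => by rcases hyx.mp h with h'|h' <;> simp_all)]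
      simp [Pi.single_apply, hya, hyb]

lemma mulVec_apply_pair' [DecidableRel G.Adj] {x a b : V} (hab : a ≠ b)
    (hx : ∀ y, G.Adj x y ↔ (y = a ∨ y = b)) (f : V → ℝ) :
    (adjMat G *ᵥ f) x = f a + f b := by
  have hN : G.neighborFinset x = {a, b} := by
    ext y; simp [SimpleGraph.mem_neighborFinset, hx y]
  have : (adjMat G *ᵥ f) x = ∑ y ∈ G.neighborFinset x, f y := by
    rw [SimpleGraph.neighborFinset_eq_filter, Finset.sum_filter]
    simp only [Matrix.mulVec, dotProduct]
    congr 1; funext y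
    by_cases h : G.Adj x y
    · rw [adjMat_of_adj' h, if_pos h, one_mul]
    · rw [adjMat_of_not_adj' h, if_neg h, zero_mul]
  rw [this, hN, Finset.sum_pair hab]

lemma key_entry' [DecidableRel G.Adj] (a0 a1 a2 a3 a4 a5 a6 a7 : V)
    (h01 : G.Adj a0 a1) (h12 : G.Adj a1 a2) (h23 : G.Adj a2 a3) (h34 : G.Adj a3 a4)
    (h45 : G.Adj a4 a5) (h56 : G.Adj a5 a6) (h67 : G.Adj a6 a7)
    (d1 : G.degree a1 = 2) (d2 : G.degree a2 = 2) (d3 : G.degree a3 = 2)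
    (d4 : G.degree a4 = 2) (d5 : G.degree a5 = 2) (d6 : G.degree a6 = 2)
    (n02 : a0 ≠ a2) (n04 : a0 ≠ a4) (n06 : a0 ≠ a6) (n13 : a1 ≠ a3) (n15 : a1 ≠ a5)
    (n17 : a1 ≠ a7) (n24 : a2 ≠ a4) (n35 : a3 ≠ a5) (n37 : a3 ≠ a7) (n46 : a4 ≠ a6)
    (n57 : a5 ≠ a7) :
    ((adjMat G)^6) a3 a3 - 5 * ((adjMat G)^4) a3 a3 + 4 * ((adjMat G)^2) a3 a3 = -2 := by
  have hN1 := nbhd_pair' h01.symm h12 n02 d1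
  have hN2 := nbhd_pair' h12.symm h23 n13 d2
  have hN3 := nbhd_pair' h23.symm h34 n24 d3
  have hN4 := nbhd_pair' h34.symm h45 n35 d4
  have hN5 := nbhd_pair' h45.symm h56 n46 d5
  have hN6 := nbhd_pair' h56.symm h67 n57 d6
  have S1 := mulVec_single_pair' n02 hN1
  have S2 := mulVec_single_pair' n13 hN2
  have S3 := mulVec_single_pair' n24 hN3
  have S4 := mulVec_single_pair' n35 hN4
  have S5 := mulVec_single_pair' n46 hN5
  have S6 := mulVec_single_pair' n57 hN6
  have na30 : ¬ G.Adj a3 a0 := fun h => by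
    rcases (hN3 a0).mp h with h'|h' <;> [exact n02 h'; exact n04 h']
  have na50 : ¬ G.Adj a5 a0 := fun h => by
    rcases (hN5 a0).mp h with h'|h' <;> [exact n04 h'; exact n06 h']
  set δ : V → ℝ := Pi.single a3 1 with hδ
  have e2 : (adjMat G) *ᵥ ((adjMat G) *ᵥ δ) =
      (Pi.single a1 1 + Pi.single a3 1) + (Pi.single a3 1 + Pi.single a5 1) := by
    rw [S3, Matrix.mulVec_add, S2, S4]
  have e3 : (adjMat G) *ᵥ ((adjMat G) *ᵥ ((adjMat G) *ᵥ δ)) =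
      ((Pi.single a0 1 + Pi.single a2 1) + (Pi.single a2 1 + Pi.single a4 1)) +
      ((Pi.single a2 1 + Pi.single a4 1) + (Pi.single a4 1 + Pi.single a6 1)) := by
    rw [e2, Matrix.mulVec_add, Matrix.mulVec_add, Matrix.mulVec_add, S1, S3, S5]
  have e4 : (adjMat G) *ᵥ ((adjMat G) *ᵥ ((adjMat G) *ᵥ ((adjMat G) *ᵥ δ))) =
      ((((adjMat G) *ᵥ Pi.single a0 1) + (Pi.single a1 1 + Pi.single a3 1)) +
        ((Pi.single a1 1 + Pi.single a3 1) + (Pi.single a3 1 + Pi.single a5 1))) +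
      (((Pi.single a1 1 + Pi.single a3 1) + (Pi.single a3 1 + Pi.single a5 1)) +
        ((Pi.single a3 1 + Pi.single a5 1) + (Pi.single a5 1 + Pi.single a7 1))) := by
    rw [e3]
    repeat rw [Matrix.mulVec_add]
    rw [S2, S4, S6]
  have eA10 : adjMat G a1 a0 = 1 := adjMat_of_adj' h01.symm
  have eA30 : adjMat G a3 a0 = 0 := adjMat_of_not_adj' na30
  have eA50 : adjMat G a5 a0 = 0 := adjMat_of_not_adj' na50
  have v41 : ((adjMat G) *ᵥ ((adjMat G) *ᵥ ((adjMat G) *ᵥ ((adjMat G) *ᵥ δ)))) a1 = 4 := by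
    rw [e4]
    simp [Pi.single_apply, eA10, n13, n15, n17]
    norm_num
  have v43 : ((adjMat G) *ᵥ ((adjMat G) *ᵥ ((adjMat G) *ᵥ ((adjMat G) *ᵥ δ)))) a3 = 6 := by
    rw [e4]
    simp [Pi.single_apply, eA30, Ne.symm n13, n35, n37]
    norm_num
  have v45 : ((adjMat G) *ᵥ ((adjMat G) *ᵥ ((adjMat G) *ᵥ ((adjMat G) *ᵥ δ)))) a5 = 4 := by
    rw [e4]
    simp [Pi.single_apply, eA50, Ne.symm n15, Ne.symm n35, n57]
    norm_num
  have entry : ∀ k : ℕ, ((adjMat G)^k) a3 a3 = (((adjMat G)^k) *ᵥ δ) a3 := by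
    intro k; rw [hδ, Matrix.mulVec_single]
    show _ = ((adjMat G)^k) a3 a3 * 1; rw [mul_one]
  have pows : ∀ k : ℕ, ((adjMat G)^(k+1)) *ᵥ δ = (adjMat G)^k *ᵥ ((adjMat G) *ᵥ δ) := by
    intro k; rw [pow_succ, ← Matrix.mulVec_mulVec]
  have m2 : ((adjMat G)^2) a3 a3 = 2 := by
    rw [entry, pows, pow_one, e2]
    simp [Pi.single_apply, Ne.symm n13, n35]
    norm_num
  have m4 : ((adjMat G)^4) a3 a3 = 6 := by
    rw [entry]
    have h4 : ((adjMat G)^4) *ᵥ δ =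
        (adjMat G) *ᵥ ((adjMat G) *ᵥ ((adjMat G) *ᵥ ((adjMat G) *ᵥ δ))) := by
      rw [pows, show (3:ℕ) = 2 + 1 from rfl, pow_succ, ← Matrix.mulVec_mulVec,
        pow_two, ← Matrix.mulVec_mulVec]
    rw [h4, v43]
  have m6 : ((adjMat G)^6) a3 a3 = 20 := by
    rw [entry]
    have h6 : ((adjMat G)^6) *ᵥ δ = (adjMat G) *ᵥ ((adjMat G) *ᵥ
        ((adjMat G) *ᵥ ((adjMat G) *ᵥ ((adjMat G) *ᵥ ((adjMat G) *ᵥ δ))))) := by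
      rw [pows, show (5:ℕ) = 4 + 1 from rfl, pow_succ, ← Matrix.mulVec_mulVec,
        show (4:ℕ) = 3 + 1 from rfl, pow_succ, ← Matrix.mulVec_mulVec,
        show (3:ℕ) = 2 + 1 from rfl, pow_succ, ← Matrix.mulVec_mulVec,
        pow_two, ← Matrix.mulVec_mulVec]
    rw [h6]
    rw [mulVec_apply_pair' n24 hN3, mulVec_apply_pair' n13 hN2, mulVec_apply_pair' n35 hN4,
      v41, v43, v45]
    norm_num
  rw [m2, m4, m6]; norm_num

lemma adjMat_isHermitian' : (adjMat G).IsHermitian := by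
  unfold Matrix.IsHermitian
  ext i j
  rw [Matrix.conjTranspose_apply, star_trivial]
  unfold adjMat
  by_cases h : G.Adj i j
  · rw [if_pos h, if_pos h.symm]
  · rw [if_neg h, if_neg (fun h' => h h'.symm)]

lemma int_sextic_nonneg' (z : ℤ) : 0 ≤ ((z:ℝ))^6 - 5*((z:ℝ))^4 + 4*((z:ℝ))^2 := by
  have h : z = -1 ∨ z = 0 ∨ z = 1 ∨ 2 ≤ z ∨ z ≤ -2 := by omega
  rcases h with h|h|h|h|h
  · subst h; norm_num
  · subst h; norm_num
  · subst h; norm_num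
  · have h2 : (2:ℝ) ≤ (z:ℝ) := by exact_mod_cast h
    nlinarith [sq_nonneg ((z:ℝ)), sq_nonneg ((z:ℝ)^2 - 4), sq_nonneg ((z:ℝ)^2 - 1)]
  · have h2 : (z:ℝ) ≤ -2 := by exact_mod_cast h
    nlinarith [sq_nonneg ((z:ℝ)), sq_nonneg ((z:ℝ)^2 - 4), sq_nonneg ((z:ℝ)^2 - 1)]

lemma diag_nonneg'
    (hint : ∀ θ : ℝ, (∃ x : V → ℝ, x ≠ 0 ∧ adjMat G *ᵥ x = θ • x) → ∃ z : ℤ, θ = z) (w : V) :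
    0 ≤ ((adjMat G)^6) w w - 5 * ((adjMat G)^4) w w + 4 * ((adjMat G)^2) w w := by
  have hA : (adjMat G).IsHermitian := adjMat_isHermitian'
  obtain ⟨lam, U, hU1, hU2, hspec, hz⟩ :
      ∃ (lam : V → ℝ) (U : Matrix V V ℝ), U * star U = 1 ∧ star U * U = 1 ∧
        adjMat G = U * Matrix.diagonal lam * star U ∧ ∀ i, ∃ z : ℤ, lam i = z := by
    refine ⟨hA.eigenvalues, (hA.eigenvectorUnitary : Matrix V V ℝ),
      (Matrix.mem_unitaryGroup_iff).mp (hA.eigenvectorUnitary).2,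
      (Matrix.mem_unitaryGroup_iff').mp (hA.eigenvectorUnitary).2, ?_, ?_⟩
    · have := hA.spectral_theorem
      rwa [RCLike.ofReal_real_eq_id, Function.id_comp] at this
    · intro i
      exact hint (hA.eigenvalues i)
        ⟨_, fun h0 => hA.eigenvectorBasis.orthonormal.ne_zero i (by simpa using h0),
          hA.mulVec_eigenvectorBasis i⟩
  have hpow : ∀ k : ℕ,
      (adjMat G)^k = U * Matrix.diagonal (fun i => lam i ^ k) * star U := by
    intro k
    induction k with
    | zero =>
      simp only [pow_zero]
      rw [show (Matrix.diagonal fun _ : V => (1:ℝ)) = 1 from Matrix.diagonal_one,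
        Matrix.mul_one, hU1]
    | succ k ih =>
      rw [pow_succ, ih, hspec]
      calc U * Matrix.diagonal (fun i => lam i ^ k) * star U *
            (U * Matrix.diagonal lam * star U)
          = U * (Matrix.diagonal (fun i => lam i ^ k) * (star U * U) *
              Matrix.diagonal lam) * star U := by
            simp only [Matrix.mul_assoc]
        _ = U * Matrix.diagonal (fun i => lam i ^ (k+1)) * star U := by
            rw [hU2, Matrix.mul_one, Matrix.diagonal_mul_diagonal,
              show (fun i => lam i ^ k * lam i) = fun i => lam i ^ (k+1) from
                funext fun i => (pow_succ _ _).symm]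
  have hentry : ∀ k : ℕ, ((adjMat G)^k) w w = ∑ i, lam i ^ k * (U w i)^2 := by
    intro k
    rw [hpow k, Matrix.mul_apply]
    congr 1; funext j
    rw [Matrix.mul_diagonal, Matrix.star_apply, star_trivial]
    ring
  rw [hentry 6, hentry 4, hentry 2, Finset.mul_sum, Finset.mul_sum,
    ← Finset.sum_sub_distrib, ← Finset.sum_add_distrib]
  apply Finset.sum_nonneg
  intro i _
  obtain ⟨z, hzi⟩ := hz i
  rw [hzi]
  have h1 := int_sextic_nonneg' z
  nlinarith [sq_nonneg (U w i), h1]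

lemma path_getVert_inj' {u v : V} (w : G.Walk u v) :
    w.IsPath → ∀ i, i ≤ w.length → ∀ j, j ≤ w.length → w.getVert i = w.getVert j → i = j := by
  induction w with
  | nil =>
    intro _ i hi j hj _
    simp only [SimpleGraph.Walk.length_nil, Nat.le_zero] at hi hj
    omega
  | cons h q ih =>
    intro hw i hi j hj hij
    rw [SimpleGraph.Walk.cons_isPath_iff] at hw
    rw [SimpleGraph.Walk.length_cons] at hi hj
    cases i with
    | zero =>
      cases j with
      | zero => rfl
      | succ j' =>
        exfalso
        rw [SimpleGraph.Walk.getVert_zero, SimpleGraph.Walk.getVert_cons_succ] at hij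
        exact hw.2 (SimpleGraph.Walk.mem_support_iff_exists_getVert.mpr
          ⟨j', hij.symm, by omega⟩)
    | succ i' =>
      cases j with
      | zero =>
        exfalso
        rw [SimpleGraph.Walk.getVert_zero, SimpleGraph.Walk.getVert_cons_succ] at hij
        exact hw.2 (SimpleGraph.Walk.mem_support_iff_exists_getVert.mpr
          ⟨i', hij, by omega⟩)
      | succ j' =>
        rw [SimpleGraph.Walk.getVert_cons_succ, SimpleGraph.Walk.getVert_cons_succ] at hij
        have := ih hw.1 i' (by omega) j' (by omega) hij
        omega

end AuxStatement17

/-- a graph with a unique path of length at least `7` between two vertices,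
all of whose inner vertices have degree `2`, has a non-integer eigenvalue. -/
theorem statement_17 {V : Type} [Fintype V] [DecidableEq V] (G : SimpleGraph V)
    [DecidableRel G.Adj] (u v : V) (p : G.Path u v)
    (huniq : ∀ q : G.Path u v, q = p)
    (hlen : 7 ≤ (p : G.Walk u v).length)
    (hdeg : ∀ w ∈ (p : G.Walk u v).support, w ≠ u → w ≠ v → G.degree w = 2) :
    ∃ θ : ℝ, (∃ x : V → ℝ, x ≠ 0 ∧ adjMat G *ᵥ x = θ • x) ∧ ∀ z : ℤ, θ ≠ (z : ℝ) := by
  by_contra hcon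
  push_neg at hcon
  have hcon' : ∀ θ : ℝ, (∃ x : V → ℝ, x ≠ 0 ∧ adjMat G *ᵥ x = θ • x) → ∃ z : ℤ, θ = z := by
    intro θ hθ
    obtain ⟨x, hx0, hx⟩ := hθ
    obtain ⟨z, hz⟩ := hcon θ ⟨x, hx0, hx⟩
    exact ⟨z, hz⟩
  have hp : (p : G.Walk u v).IsPath := p.2
  have hinj := path_getVert_inj' (p : G.Walk u v) hp
  set w : G.Walk u v := (p : G.Walk u v) with hwdef
  set s : ℕ → V := w.getVert with hs
  have hadj : ∀ i, i < w.length → G.Adj (s i) (s (i+1)) :=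
    fun i hi => SimpleGraph.Walk.adj_getVert_succ w hi
  have hlen' : 7 ≤ w.length := hlen
  have hne : ∀ i j : ℕ, i ≤ 7 → j ≤ 7 → i ≠ j → s i ≠ s j :=
    fun i j hi hj hij heq => hij (hinj i (by omega) j (by omega) heq)
  have hdeg' : ∀ i : ℕ, 1 ≤ i → i ≤ 6 → G.degree (s i) = 2 := by
    intro i h1 h6
    apply hdeg
    · exact SimpleGraph.Walk.mem_support_iff_exists_getVert.mpr ⟨i, rfl, by omega⟩
    · intro h
      have hu : s i = w.getVert 0 := by rw [h, SimpleGraph.Walk.getVert_zero]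
      have := hinj i (by omega) 0 (by omega) hu
      omega
    · intro h
      have hv : s i = w.getVert w.length := by rw [h, SimpleGraph.Walk.getVert_length]
      have := hinj i (by omega) w.length (le_refl _) hv
      omega
  have hk := key_entry' (G := G) (s 0) (s 1) (s 2) (s 3) (s 4) (s 5) (s 6) (s 7)
    (hadj 0 (by omega)) (hadj 1 (by omega)) (hadj 2 (by omega)) (hadj 3 (by omega))
    (hadj 4 (by omega)) (hadj 5 (by omega)) (hadj 6 (by omega))
    (hdeg' 1 (by omega) (by omega)) (hdeg' 2 (by omega) (by omega))
    (hdeg' 3 (by omega) (by omega)) (hdeg' 4 (by omega) (by omega))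
    (hdeg' 5 (by omega) (by omega)) (hdeg' 6 (by omega) (by omega))
    (hne 0 2 (by omega) (by omega) (by omega)) (hne 0 4 (by omega) (by omega) (by omega))
    (hne 0 6 (by omega) (by omega) (by omega)) (hne 1 3 (by omega) (by omega) (by omega))
    (hne 1 5 (by omega) (by omega) (by omega)) (hne 1 7 (by omega) (by omega) (by omega))
    (hne 2 4 (by omega) (by omega) (by omega)) (hne 3 5 (by omega) (by omega) (by omega))
    (hne 3 7 (by omega) (by omega) (by omega)) (hne 4 6 (by omega) (by omega) (by omega))
    (hne 5 7 (by omega) (by omega) (by omega))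
  have hd := diag_nonneg' hcon' (s 3)
  rw [hk] at hd
  linarith


end
end
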